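/- arXiv:1608.02342 — 5 statements merged into one kernel-verified Lean document; each statement's English description precedes it below -/
import Mathlib

section
/- For an odd prime p, an element a of ℚ_p lies in ℤ_p if and only if there exists y ∈ ℚ_p with y² = 1 + p·a². -/
/-- Julia Robinson: for an odd prime `p`, `a ∈ ℤ_p` iff `∃ y, y² = 1 + p·a²`. -/
theorem robinson_odd_prime (p : ℕ) [Fact p.Prime] (hp : p ≠ 2) (a : ℚ_[p]) :
    (∃ b : ℤ_[p], (b : ℚ_[p]) = a) ↔ ∃ y : ℚ_[p], y ^ 2 = 1 + (p : ℚ_[p]) * a ^ 2 := by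
  have hp1 : (1 : ℝ) < (p : ℝ) := by
    exact_mod_cast (Fact.out : p.Prime).one_lt
  have hp0 : (0 : ℝ) < (p : ℝ) := by linarith
  constructor
  · rintro ⟨b, rfl⟩
    -- use Hensel's lemma with F = X^2 - (1 + p b^2), approximate root 1
    set F : Polynomial ℤ_[p] :=
      Polynomial.X ^ 2 - Polynomial.C (1 + (p : ℤ_[p]) * b ^ 2) with hF
    have heval : F.eval 1 = -((p : ℤ_[p]) * b ^ 2) := by
      simp only [hF, Polynomial.eval_sub, Polynomial.eval_pow, Polynomial.eval_X,
        Polynomial.eval_C, one_pow]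
      ring
    have hderiv : F.derivative.eval 1 = 2 := by
      simp only [hF, Polynomial.derivative_sub, Polynomial.derivative_C,
        Polynomial.derivative_X_pow, sub_zero, Polynomial.eval_mul, Polynomial.eval_pow,
        Polynomial.eval_X, Polynomial.eval_natCast, one_pow, mul_one]
      norm_num
    have h2 : ‖(2 : ℤ_[p])‖ = 1 := by
      apply le_antisymm (PadicInt.norm_le_one _)
      by_contra h
      push_neg at h
      rw [show ((2 : ℤ_[p])) = ((2 : ℤ) : ℤ_[p]) by norm_cast,
        PadicInt.norm_int_lt_one_iff_dvd] at h
      have h2 := Int.le_of_dvd (by norm_num) h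
      have h3 := (Fact.out : p.Prime).two_le
      omega
    have hnorm : ‖F.eval 1‖ < ‖F.derivative.eval 1‖ ^ 2 := by
      rw [heval, hderiv, h2, norm_neg, one_pow, norm_mul, PadicInt.norm_p]
      calc (p : ℝ)⁻¹ * ‖b ^ 2‖ ≤ (p : ℝ)⁻¹ * 1 := by
            gcongr; exact PadicInt.norm_le_one _
        _ < 1 := by rw [mul_one, inv_lt_one_iff₀]; right; exact hp1
    obtain ⟨z, hz, -⟩ := hensels_lemma hnorm
    refine ⟨(z : ℚ_[p]), ?_⟩
    have : (z : ℤ_[p]) ^ 2 = 1 + (p : ℤ_[p]) * b ^ 2 := by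
      have := hz
      simp [hF, sub_eq_zero] at this
      exact this
    exact_mod_cast congrArg (fun x : ℤ_[p] => (x : ℚ_[p])) this
  · rintro ⟨y, hy⟩
    suffices h : ‖a‖ ≤ 1 by exact ⟨⟨a, h⟩, rfl⟩
    by_contra h
    push_neg at h
    have ha0 : a ≠ 0 := by rintro rfl; simp at h; linarith
    set v := a.valuation with hv
    have hna : ‖a‖ = (p : ℝ) ^ (-v) := Padic.norm_eq_zpow_neg_valuation ha0
    have hvneg : v < 0 := by
      by_contra hc
      push_neg at hc
      have : (p : ℝ) ^ (-v) ≤ (p : ℝ) ^ (0 : ℤ) := by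
        apply zpow_le_zpow_right₀ (le_of_lt hp1); omega
      rw [zpow_zero] at this
      rw [hna] at h; linarith
    have hpa : ‖(p : ℚ_[p]) * a ^ 2‖ = (p : ℝ) ^ (-1 - 2 * v) := by
      rw [norm_mul, norm_pow, hna, Padic.norm_p, ← zpow_natCast (((p:ℝ))^(-v)),
        ← zpow_mul, ← zpow_neg_one]
      rw [← zpow_add₀ (ne_of_gt hp0)]
      ring_nf
    have hpa1 : (1 : ℝ) < ‖(p : ℚ_[p]) * a ^ 2‖ := by
      rw [hpa]
      calc (1:ℝ) = (p:ℝ) ^ (0:ℤ) := by simp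
        _ < (p:ℝ) ^ (-1 - 2*v) := by
            apply zpow_lt_zpow_right₀ hp1; omega
    have hsum : ‖(1 : ℚ_[p]) + (p : ℚ_[p]) * a ^ 2‖ = ‖(p : ℚ_[p]) * a ^ 2‖ := by
      rw [Padic.add_eq_max_of_ne (by rw [norm_one]; exact ne_of_lt hpa1)]
      rw [norm_one]
      exact max_eq_right (le_of_lt hpa1)
    have hy0 : y ≠ 0 := by
      rintro rfl
      rw [← hy] at hsum
      simp at hsum
      rcases hsum with h' | h'
      · exact absurd h' (Fact.out : p.Prime).ne_zero
      · exact ha0 h'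
    set w := y.valuation with hw
    have hny : ‖y‖ = (p : ℝ) ^ (-w) := Padic.norm_eq_zpow_neg_valuation hy0
    have key : (p : ℝ) ^ (-2 * w) = (p : ℝ) ^ (-1 - 2 * v) := by
      have h1 : ‖y ^ 2‖ = (p : ℝ) ^ (-2 * w) := by
        rw [norm_pow, hny, ← zpow_natCast (((p:ℝ))^(-w)), ← zpow_mul]
        ring_nf
      rw [hy, hsum, hpa] at h1
      linarith [h1]
    have := zpow_right_injective₀ hp0 (ne_of_gt hp1) key
    omega
end

section
/- An element a of ℚ₂ lies in ℤ₂ if and only if there exists y ∈ ℚ₂ with y² = 1 + 8·a². -/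
lemma norm_eight_q : ‖(8 : ℚ_[2])‖ = 1/8 := by
  have h : (8 : ℚ_[2]) = (2 : ℕ) ^ (3:ℕ) := by norm_num
  rw [h, Padic.norm_p_pow]; norm_num

lemma norm_two_q : ‖(2 : ℚ_[2])‖ = 1/2 := by
  have h : (2 : ℚ_[2]) = (2 : ℕ) := by norm_num
  rw [h, Padic.norm_p]; norm_num

lemma disc (x : ℚ_[2]) (h : ‖x‖ < 1) : ‖x‖ ≤ 1/2 := by
  have := (Padic.norm_le_pow_iff_norm_lt_pow_add_one x (-1)).2
  simp only [neg_add_cancel, zpow_zero] at this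
  simpa [zpow_neg_one] using this h

lemma key (a y : ℚ_[2]) (h : y ^ 2 = 1 + 8 * a ^ 2) : ‖a‖ ≤ 1 := by
  by_contra hn
  push_neg at hn
  have ha0 : a ≠ 0 := by intro h0; rw [h0] at hn; norm_num at hn
  set v : ℤ := a.valuation with hv
  have hav : ‖a‖ = (2:ℝ) ^ (-v) := by simpa using Padic.norm_eq_zpow_neg_valuation ha0
  have hvneg : v ≤ -1 := by
    have h1 : (2:ℝ) ^ (0:ℤ) < (2:ℝ) ^ (-v) := by
      rw [zpow_zero]; rw [hav] at hn; exact hn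
    have := (zpow_lt_zpow_iff_right₀ (by norm_num : (1:ℝ) < 2)).1 h1
    omega
  have hN : ‖8 * a ^ 2‖ = (2:ℝ) ^ (-3 - 2*v) := by
    rw [norm_mul, norm_pow, norm_eight_q, hav, ← zpow_natCast ((2:ℝ)^(-v)) 2,
      ← zpow_mul, show (1:ℝ)/8 = (2:ℝ)^(-3:ℤ) by norm_num,
      ← zpow_add₀ (by norm_num : (2:ℝ) ≠ 0)]
    ring_nf
  rcases le_or_gt (-1 : ℤ) v with hc | hc
  · -- v = -1 : ‖8a²‖ = 1/2
    have hveq : v = -1 := le_antisymm hvneg hc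
    have hNval : ‖8 * a ^ 2‖ = 1/2 := by
      rw [hN, hveq]; norm_num
    -- y² - 1 = 8a²
    have hfac : ‖y - 1‖ * ‖y + 1‖ = 1/2 := by
      rw [← norm_mul]
      have : (y - 1) * (y + 1) = 8 * a ^ 2 := by linear_combination h
      rw [this, hNval]
    have h2 : ‖(2 : ℚ_[2])‖ = 1/2 := norm_two_q
    have hnn1 : (0:ℝ) ≤ ‖y - 1‖ := norm_nonneg _
    have hnn2 : (0:ℝ) ≤ ‖y + 1‖ := norm_nonneg _
    rcases lt_or_ge ‖y - 1‖ 1 with hs | hs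
    · have hs2 : ‖y - 1‖ ≤ 1/2 := disc _ hs
      have ht2 : ‖y + 1‖ ≤ 1/2 := by
        have : y + 1 = (y - 1) + 2 := by ring
        rw [this]
        calc ‖(y-1) + 2‖ ≤ max ‖y-1‖ ‖(2:ℚ_[2])‖ := Padic.nonarchimedean _ _
          _ ≤ 1/2 := by rw [h2]; exact max_le hs2 le_rfl
      nlinarith
    · have ht2 : ‖y + 1‖ < 1 := by nlinarith
      have ht3 : ‖y + 1‖ ≤ 1/2 := disc _ ht2
      have hs2 : ‖y - 1‖ ≤ 1/2 := by
        have : y - 1 = (y + 1) - 2 := by ring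
        rw [this]
        calc ‖(y+1) - 2‖ ≤ max ‖y+1‖ ‖(2:ℚ_[2])‖ := by
              have h3 := Padic.nonarchimedean (y+1) (-2)
              rw [norm_neg] at h3
              calc ‖(y+1) - 2‖ = ‖(y+1) + (-2)‖ := by rw [sub_eq_add_neg]
                _ ≤ max ‖y+1‖ ‖(2:ℚ_[2])‖ := h3
          _ ≤ 1/2 := by rw [h2]; exact max_le ht3 le_rfl
      linarith
  · -- v ≤ -2 : ‖8a²‖ = 2^k with k = -3-2v ≥ 1 > 1 = ‖1‖
    have hk : (1:ℤ) ≤ -3 - 2*v := by omega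
    have hNgt : (1:ℝ) < ‖8 * a ^ 2‖ := by
      rw [hN]
      calc (1:ℝ) = (2:ℝ) ^ (0:ℤ) := by norm_num
        _ < (2:ℝ) ^ (-3 - 2*v) := by
          rw [zpow_lt_zpow_iff_right₀ (by norm_num : (1:ℝ) < 2)]; omega
    have hne : ‖(1:ℚ_[2])‖ ≠ ‖8 * a ^ 2‖ := by rw [norm_one]; exact ne_of_lt hNgt
    have hy2 : ‖y ^ 2‖ = (2:ℝ) ^ (-3 - 2*v) := by
      rw [h, Padic.add_eq_max_of_ne hne, norm_one, hN,
        max_eq_right (le_of_lt (by rw [hN] at hNgt; exact hNgt))]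
    have hy0 : y ≠ 0 := by
      intro h0; rw [h0] at hy2; simp at hy2
      have : (0:ℝ) < (2:ℝ) ^ (-3 - 2*v) := zpow_pos (by norm_num) _
      rw [← hy2] at this; exact lt_irrefl _ this
    have hyv : ‖y‖ = (2:ℝ) ^ (-y.valuation) := by simpa using Padic.norm_eq_zpow_neg_valuation hy0
    rw [norm_pow, hyv, ← zpow_natCast ((2:ℝ)^(-y.valuation)) 2, ← zpow_mul] at hy2
    have := (zpow_right_inj₀ (by norm_num : (0:ℝ) < 2) (by norm_num : (2:ℝ) ≠ 1)).1 hy2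
    omega


lemma norm_eight_z : ‖(8 : ℤ_[2])‖ = 1/8 := by
  have h : (8 : ℤ_[2]) = (2 : ℕ) ^ (3:ℕ) := by norm_num
  rw [h, PadicInt.norm_p_pow]; norm_num

lemma fwd (b : ℤ_[2]) : ∃ z : ℤ_[2], z ^ 2 = 1 + 8 * b ^ 2 := by
  set F : Polynomial ℤ_[2] := Polynomial.X ^ 2 - Polynomial.C (1 + 8 * b ^ 2) with hF
  have heval : F.eval 1 = -(8 * b ^ 2) := by simp [hF]
  have hderiv : F.derivative.eval 1 = 2 := by
    rw [hF, Polynomial.derivative_sub, Polynomial.derivative_C, Polynomial.derivative_X_pow]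
    simp
  have htwo : ‖(2 : ℤ_[2])‖ = 1/2 := by
    have : (2 : ℤ_[2]) = (2 : ℕ) := by norm_num
    rw [this, PadicInt.norm_p]; norm_num
  have hnorm : ‖F.eval 1‖ < ‖F.derivative.eval 1‖ ^ 2 := by
    rw [heval, hderiv, htwo, norm_neg, norm_mul, norm_eight_z, norm_pow]
    have hb := b.norm_le_one  -- check name
    nlinarith [norm_nonneg b]
  obtain ⟨z, hz, -⟩ := hensels_lemma hnorm
  refine ⟨z, ?_⟩
  have : z ^ 2 - (1 + 8 * b ^ 2) = 0 := by simpa [hF] using hz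
  linear_combination this

/-- Julia Robinson's definition for `p = 2`: `a ∈ ℤ₂` iff `∃ y, y² = 1 + 8·a²`. -/
theorem robinson_two (a : ℚ_[2]) :
    (∃ b : ℤ_[2], (b : ℚ_[2]) = a) ↔ ∃ y : ℚ_[2], y ^ 2 = 1 + 8 * a ^ 2 := by
  constructor
  · rintro ⟨b, rfl⟩
    obtain ⟨z, hz⟩ := fwd b
    refine ⟨(z : ℚ_[2]), ?_⟩
    have := congrArg (fun t : ℤ_[2] => (t : ℚ_[2])) hz
    push_cast at this
    exact this
  · rintro ⟨y, hy⟩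
    exact ⟨⟨a, key a y hy⟩, rfl⟩
end

section
/- Let F be a field and m > 1 an integer with char(F) ∤ m. For a ∈ F((t)), if there exists y ∈ F((t)) with yᵐ = 1 + t·aᵐ, then a lies in F[[t]]. -/
open LaurentSeries
open scoped Multiplicative
open scoped WithZero

/-- Ax's key implication: if `1 + t·aᵐ` is an `m`-th power in `F((t))`
(with `m > 1` and `char F ∤ m`), then `a ∈ F[[t]]`. -/
theorem ax_laurent_series (F : Type*) [Field F] (m : ℕ) (hm : 1 < m)
    (hchar : ¬ (ringChar F ∣ m)) (a : LaurentSeries F)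
    (h : ∃ y : LaurentSeries F, y ^ m = 1 + ((PowerSeries.X : PowerSeries F) : LaurentSeries F) * a ^ m) :
    ∃ b : PowerSeries F, (b : LaurentSeries F) = a := by
  obtain ⟨y, hy⟩ := h
  suffices hle : Valued.v a ≤ (1 : ℤᵐ⁰) from (val_le_one_iff_eq_coe F a).mp hle
  by_contra hgt
  push_neg at hgt
  -- `a ≠ 0`, so its valuation is a nonzero element `n` of `Multiplicative ℤ`
  have hva0 : (Valued.v a : ℤᵐ⁰) ≠ 0 := ne_of_gt (lt_trans zero_lt_one hgt)
  set n : Multiplicative ℤ := WithZero.unzero hva0 with hn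
  have hva : (Valued.v a : ℤᵐ⁰) = (n : ℤᵐ⁰) := (WithZero.coe_unzero hva0).symm
  have hn1 : (0 : ℤ) < Multiplicative.toAdd n := by
    have : (1 : ℤᵐ⁰) < (n : ℤᵐ⁰) := hva ▸ hgt
    rw [← WithZero.coe_one, WithZero.coe_lt_coe] at this
    rwa [← Multiplicative.toAdd_lt, toAdd_one] at this
  -- valuation of X
  have hvX : Valued.v ((PowerSeries.X : PowerSeries F) : LaurentSeries F) =
      ((Multiplicative.ofAdd (-1 : ℤ) : Multiplicative ℤ) : ℤᵐ⁰) := by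
    have := valuation_X_pow F 1
    simpa [WithZero.exp] using this
  -- valuation of X * a ^ m
  have hvXa : Valued.v (((PowerSeries.X : PowerSeries F) : LaurentSeries F) * a ^ m) =
      ((Multiplicative.ofAdd (-1 : ℤ) * n ^ m : Multiplicative ℤ) : ℤᵐ⁰) := by
    rw [map_mul, map_pow, hvX, hva, ← WithZero.coe_pow, ← WithZero.coe_mul]
  have hbig : Valued.v (1 : LaurentSeries F) <
      Valued.v (((PowerSeries.X : PowerSeries F) : LaurentSeries F) * a ^ m) := by
    rw [hvXa, map_one, ← WithZero.coe_one, WithZero.coe_lt_coe, ← Multiplicative.toAdd_lt]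
    simp only [toAdd_mul, toAdd_ofAdd, toAdd_pow, toAdd_one, nsmul_eq_mul]
    nlinarith [hn1, (by exact_mod_cast hm : (1:ℤ) < (m:ℤ))]
  have hsum : Valued.v (y ^ m) =
      ((Multiplicative.ofAdd (-1 : ℤ) * n ^ m : Multiplicative ℤ) : ℤᵐ⁰) := by
    rw [hy, Valuation.map_add_eq_of_lt_right _ hbig, hvXa]
  -- y ≠ 0
  have hvy0 : (Valued.v y : ℤᵐ⁰) ≠ 0 := by
    intro h0
    rw [map_pow, h0, zero_pow (by omega)] at hsum
    exact (WithZero.coe_ne_zero (a := Multiplicative.ofAdd (-1 : ℤ) * n ^ m)) hsum.symm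
  set k : Multiplicative ℤ := WithZero.unzero hvy0 with hk
  have hvy : (Valued.v y : ℤᵐ⁰) = (k : ℤᵐ⁰) := (WithZero.coe_unzero hvy0).symm
  rw [map_pow, hvy, ← WithZero.coe_pow, WithZero.coe_inj] at hsum
  have hadd : m * Multiplicative.toAdd k = -1 + m * Multiplicative.toAdd n := by
    have := congrArg Multiplicative.toAdd hsum
    simpa [toAdd_pow, toAdd_mul, nsmul_eq_mul] using this
  have hdvd : (m : ℤ) ∣ 1 := ⟨Multiplicative.toAdd n - Multiplicative.toAdd k, by linarith [hadd]⟩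
  have := Int.le_of_dvd one_pos hdvd
  omega
end

section
/- Let (K, v) be a henselian valued field of residue characteristic not dividing m, where m > 1 and K contains a primitive m-th root of unity. If w ∈ K satisfies v(w) = 0 and the residue of w is not an m-th power in the residue field, then for a ∈ K: if 1 + w·aᵐ is an m-th power in K, then v(a) ≥ 0. -/
/-- If `w` is a unit of the valuation ring whose residue is not an `m`-th power
in the residue field (with a primitive `m`-th root of unity in `K` and residue
characteristic prime to `m`), then `1 + w·aᵐ` being an `m`-th power forces `v(a) ≥ 0`. -/
theorem henselian_nonpower_residue {K : Type*} [Field K] {Γ : Type*}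
    [LinearOrderedCommGroupWithZero Γ] (v : Valuation K Γ)
    [HenselianLocalRing v.valuationSubring]
    (m : ℕ) (hm : 1 < m)
    (hchar : ¬ (ringChar (IsLocalRing.ResidueField v.valuationSubring) ∣ m))
    (ζ : K) (hζ : IsPrimitiveRoot ζ m)
    (w : K) (hw : v w = 1)
    (hres : ¬ ∃ r : IsLocalRing.ResidueField v.valuationSubring,
      r ^ m = IsLocalRing.residue v.valuationSubring
        ⟨w, (Valuation.mem_valuationSubring_iff v w).mpr hw.le⟩)
    (a : K) (h : ∃ y : K, y ^ m = 1 + w * a ^ m) :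
    v a ≤ 1 := by
  by_contra hva
  push_neg at hva
  obtain ⟨y, hy⟩ := h
  have ha0 : a ≠ 0 := by
    rintro rfl
    simp at hva
  have hva0 : (0 : Γ) < v a := zero_lt_one.trans hva
  -- v (w * a ^ m) = v a ^ m > 1
  have hvwam : v (w * a ^ m) = v a ^ m := by simp [hw]
  have honelt : (1 : Γ) < v (w * a ^ m) := by
    rw [hvwam]
    exact one_lt_pow₀ hva (by omega)
  have hvsum : v (1 + w * a ^ m) = v a ^ m := by
    rw [add_comm, ← hvwam]
    exact Valuation.map_add_eq_of_lt_left v (by simpa using honelt)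
  have hvy : v y ^ m = v a ^ m := by
    rw [← map_pow, hy, hvsum]
  -- let t = y / a; v t = 1
  set t := y / a with ht_def
  have hvt_pow : v t ^ m = 1 := by
    rw [ht_def, map_div₀, div_pow, hvy, div_self (pow_ne_zero _ (ne_of_gt hva0))]
  have hvt : v t = 1 := by
    rcases lt_trichotomy (v t) 1 with hlt | heq | hgt
    · have : v t ^ m < 1 := by
        have h0 : v t ≠ 0 := by
          intro h0; rw [h0] at hvt_pow; simp [zero_pow (by omega : m ≠ 0)] at hvt_pow
        exact pow_lt_one₀ (le_of_lt (lt_of_le_of_ne zero_le' (Ne.symm h0))) hlt (by omega)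
      rw [hvt_pow] at this; exact absurd this (lt_irrefl 1)
    · exact heq
    · have : (1 : Γ) < v t ^ m := one_lt_pow₀ hgt (by omega)
      rw [hvt_pow] at this; exact absurd this (lt_irrefl 1)
  -- t^m = w + a⁻ᵐ
  have hy0 : y ≠ 0 := by
    intro h0
    rw [ht_def, h0] at hvt; simp at hvt
  have htm : t ^ m = w + (a ^ m)⁻¹ := by
    rw [ht_def, div_pow, hy, add_div, mul_div_assoc,
      div_self (pow_ne_zero _ ha0), mul_one, one_div]
    ring
  -- residues
  set W : v.valuationSubring := ⟨w, (Valuation.mem_valuationSubring_iff v w).mpr hw.le⟩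
  set T : v.valuationSubring := ⟨t, (Valuation.mem_valuationSubring_iff v t).mpr hvt.le⟩
  apply hres
  refine ⟨IsLocalRing.residue v.valuationSubring T, ?_⟩
  rw [← map_pow, ← sub_eq_zero, ← map_sub]
  have hmem : (T ^ m - W : v.valuationSubring) ∈ IsLocalRing.maximalIdeal v.valuationSubring := by
    rw [ValuationSubring.valuation_lt_one_iff]
    rw [← (Valuation.isEquiv_valuation_valuationSubring v).lt_one_iff_lt_one]
    have : ((T ^ m - W : v.valuationSubring) : K) = (a ^ m)⁻¹ := by
      push_cast
      rw [htm]; ring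
    rw [this, map_inv₀, map_pow]
    rw [inv_lt_one₀ (pow_pos hva0 m)]
    exact one_lt_pow₀ hva (by omega)
  exact Ideal.Quotient.eq_zero_iff_mem.mpr hmem
end

section
/- Let K be a field and let v, w be valuations on K whose valuation rings are comparable, with 𝒪_v ⊆ 𝒪_w. If v is henselian, then w is henselian. -/
open Polynomial IsLocalRing Finset

section Aux

variable {K : Type*} [Field K]

/-- A product of an element of `B` and a nonunit of `B` is a nonunit of `B`. -/
theorem aux_mul_nonunit (B : ValuationSubring K) {x y : K} (hx : x ∈ B)
    (hy : y ∈ B.nonunits) : x * y ∈ B.nonunits := by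
  rw [ValuationSubring.mem_nonunits_iff] at hy ⊢
  calc B.valuation (x * y) = B.valuation x * B.valuation y := map_mul _ _ _
    _ ≤ 1 * B.valuation y := mul_le_mul_left ((B.valuation_le_one_iff x).2 hx) _
    _ = B.valuation y := one_mul _
    _ < 1 := hy

/-- In a local ring, a unit plus an element of the maximal ideal is a unit. -/
theorem aux_unit_add {R : Type*} [CommRing R] [IsLocalRing R] {w s : R}
    (hw : IsUnit w) (hs : s ∈ maximalIdeal R) : IsUnit (w + s) := by
  by_contra hws
  have h1 : w + s ∈ maximalIdeal R := hws
  have h2 : w ∈ maximalIdeal R := by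
    have := Ideal.sub_mem _ h1 hs
    simpa using this
  exact h2 hw

end Aux

/-- A coarsening of a henselian valuation is henselian. -/
theorem coarsening_henselian {K : Type*} [Field K]
    (A B : ValuationSubring K) (h : A ≤ B) [HenselianLocalRing A] :
    HenselianLocalRing B := by
  refine { toIsLocalRing := inferInstance, is_henselian := ?_ }
  intro f hf a₀ h₁ h₂
  classical
  by_cases hc0 : f.eval a₀ = 0
  · exact ⟨a₀, hc0, by simp⟩
  -- the degree is positive
  have hn1 : 1 ≤ f.natDegree := by
    by_contra hn
    push_neg at hn
    have hfone : f = 1 := hf.natDegree_eq_zero.mp (by omega)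
    rw [hfone] at h₁
    simp only [eval_one] at h₁
    exact h₁ isUnit_one
  obtain ⟨m, hm⟩ : ∃ m, f.natDegree = m + 1 := ⟨f.natDegree - 1, by omega⟩
  set c : B := f.eval a₀ with hc
  set u : B := f.derivative.eval a₀ with hu
  set cK : K := (c : K) with hcKdef
  set uK : K := (u : K) with huKdef
  have hcK : cK ≠ 0 := by
    simpa [hcKdef, ZeroMemClass.coe_eq_zero] using hc0
  have huK0 : uK ≠ 0 := by
    intro h0
    have : u = 0 := Subtype.ext h0
    rw [this] at h₂
    exact not_isUnit_zero h₂
  -- the inverse of u inside B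
  set u' : B := ↑(h₂.unit⁻¹) with hu'def
  have hu' : (u' : K) = uK⁻¹ := by
    have h1 : u * u' = 1 := h₂.mul_val_inv
    have h2 : uK * (u' : K) = 1 := by
      have h3 := Subtype.ext_iff.mp h1
      push_cast at h3
      exact h3
    field_simp [eq_inv_of_mul_eq_one_right h2]
    rw [mul_comm]; exact h2
  -- the Taylor expansion of f at a₀
  set q : Polynomial B := taylor a₀ f with hq
  have hq0 : q.coeff 0 = c := taylor_coeff_zero a₀ f
  have hq1 : q.coeff 1 = u := taylor_coeff_one a₀ f
  -- nonunits inclusions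
  have hnon : B.nonunits ≤ A.nonunits := ValuationSubring.nonunits_le_nonunits.mpr h
  have hcnon : cK ∈ B.nonunits := ValuationSubring.coe_mem_nonunits_iff.mpr h₁
  -- the coefficients of the auxiliary polynomial
  set e : ℕ → K := fun j => (q.coeff ((m + 1) - j) : K) * (cK / uK) ^ ((m + 1) - j) / cK
    with he
  have heTop : e (m + 1) = 1 := by
    simp only [he, Nat.sub_self, pow_zero, hq0, mul_one]
    exact div_self hcK
  have heM : e m = 1 := by
    simp only [he, Nat.add_sub_cancel_left, pow_one, hq1]
    field_simp
    rfl
  have heSmall : ∀ j, j < m → e j ∈ B.nonunits := by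
    intro j hj
    obtain ⟨k, hk⟩ : ∃ k, (m + 1) - j = k + 2 := ⟨m - 1 - j, by omega⟩
    have hrw : e j = ((q.coeff (k + 2) : K) * (u' : K) ^ (k + 2) * cK ^ k) * cK := by
      rw [he]
      simp only [hk, hu']
      field_simp
      ring
    rw [hrw]
    refine aux_mul_nonunit B ?_ hcnon
    exact mul_mem (mul_mem (q.coeff (k + 2)).2 (pow_mem u'.2 _)) (pow_mem c.2 _)
  have heA : ∀ j, j ≤ m + 1 → e j ∈ A := by
    intro j hj
    rcases lt_trichotomy j m with hjm | rfl | hjm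
    · exact ValuationSubring.nonunits_subset (hnon (heSmall j hjm))
    · rw [heM]; exact one_mem A
    · have : j = m + 1 := by omega
      rw [this, heTop]; exact one_mem A
  set eA : ℕ → A := fun j => if hj : j ≤ m + 1 then ⟨e j, heA j hj⟩ else 0 with heA'
  have heAcoe : ∀ j, j ≤ m + 1 → ((eA j : K)) = e j := by
    intro j hj
    simp [heA', hj]
  have heAmem : ∀ j, j < m → eA j ∈ maximalIdeal A := by
    intro j hj
    rw [← ValuationSubring.coe_mem_nonunits_iff]
    rw [heAcoe j (by omega)]
    exact hnon (heSmall j hj)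
  -- the auxiliary polynomial over A
  set G : Polynomial A := ∑ j ∈ range m, C (eA j) * X ^ j with hG
  set H : Polynomial A := X ^ (m + 1) + (X ^ m + G) with hH
  have hGdeg : G.degree ≤ (m : WithBot ℕ) := by
    refine (degree_sum_le _ _).trans ?_
    refine Finset.sup_le fun j hj => ?_
    refine (degree_C_mul_X_pow_le _ _).trans ?_
    exact_mod_cast Nat.le_of_lt_succ (Nat.lt_succ_of_lt (mem_range.mp hj))
  have hHmonic : H.Monic := by
    refine monic_X_pow_add ?_
    refine (degree_add_le _ _).trans_lt ?_
    refine max_lt ?_ (hGdeg.trans_lt ?_)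
    · rw [degree_X_pow]; exact_mod_cast Nat.lt_succ_self m
    · exact_mod_cast Nat.lt_succ_self m
  have hGeval : ∀ x : A, G.eval x = ∑ j ∈ range m, eA j * x ^ j := by
    intro x
    rw [hG, eval_finset_sum]
    simp
  have hHev : H.eval (-1) ∈ maximalIdeal A := by
    have : H.eval (-1) = ∑ j ∈ range m, eA j * (-1) ^ j := by
      rw [hH]
      simp only [eval_add, eval_pow, eval_X, hGeval]
      rw [pow_succ]
      ring
    rw [this]
    exact Ideal.sum_mem _ fun j hj => Ideal.mul_mem_right _ _ (heAmem j (mem_range.mp hj))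
  have hHder : IsUnit (H.derivative.eval (-1)) := by
    have hcalc : H.derivative.eval (-1) = ((m + 1 : ℕ) : A) * (-1) ^ m
        + ((m : ℕ) : A) * (-1) ^ (m - 1)
        + ∑ j ∈ range m, (eA j * (j : A)) * (-1) ^ (j - 1) := by
      rw [hH, hG]
      simp only [derivative_add, derivative_X_pow, derivative_sum, derivative_C_mul_X_pow,
        eval_add, eval_finset_sum, eval_mul, eval_C, eval_pow, eval_X, Nat.add_sub_cancel]
      ring
    have hw : IsUnit (((m + 1 : ℕ) : A) * (-1) ^ m + ((m : ℕ) : A) * (-1) ^ (m - 1)) := by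
      rcases Nat.eq_zero_or_pos m with rfl | hm0
      · simp
      · obtain ⟨k, rfl⟩ : ∃ k, m = k + 1 := ⟨m - 1, by omega⟩
        have : ((k + 1 + 1 : ℕ) : A) * (-1) ^ (k + 1) + ((k + 1 : ℕ) : A) * (-1) ^ (k + 1 - 1)
            = -(-1) ^ k := by
          push_cast
          ring
        rw [this]
        exact ((isUnit_one.neg).pow k).neg
    rw [hcalc]
    exact aux_unit_add hw (Ideal.sum_mem _ fun j hj =>
      Ideal.mul_mem_right _ _ (Ideal.mul_mem_right _ _ (heAmem j (mem_range.mp hj))))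
  obtain ⟨b, hbroot, hbm⟩ := HenselianLocalRing.is_henselian H hHmonic (-1) hHev hHder
  have hbunit : IsUnit b := by
    by_contra hb
    have hbmem : b ∈ maximalIdeal A := hb
    have : (1 : A) ∈ maximalIdeal A := by
      have := Ideal.sub_mem _ hbm hbmem
    -- b - (-1) - b = 1
      simpa using this
    exact this isUnit_one
  set bK : K := (b : K) with hbKdef
  have hbK0 : bK ≠ 0 := by
    intro h0
    have : b = 0 := Subtype.ext h0
    rw [this] at hbunit
    exact not_isUnit_zero hbunit
  set b' : A := ↑(hbunit.unit⁻¹) with hb'def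
  have hb' : (b' : K) = bK⁻¹ := by
    have h1 : b * b' = 1 := hbunit.mul_val_inv
    have h2 : bK * (b' : K) = 1 := by
      have h3 := Subtype.ext_iff.mp h1
      push_cast at h3
      exact h3
    field_simp [eq_inv_of_mul_eq_one_right h2]
    rw [mul_comm]; exact h2
  -- the root of f
  set t : K := cK * (u' : K) * (b' : K) with ht
  have htB : t ∈ B := mul_mem (mul_mem c.2 u'.2) (h b'.2)
  have htnon : t ∈ B.nonunits := by
    have : t = ((u' : K) * (b' : K)) * cK := by rw [ht]; ring
    rw [this]
    exact aux_mul_nonunit B (mul_mem u'.2 (h b'.2)) hcnon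
  refine ⟨a₀ + ⟨t, htB⟩, ?_, ?_⟩
  swap
  · rw [add_sub_cancel_left]
    exact ValuationSubring.coe_mem_nonunits_iff.mp htnon
  -- main computation
  have hroot : (B.subtype) (f.eval (a₀ + ⟨t, htB⟩)) = 0 := by
    have e1 : (B.subtype) (f.eval (a₀ + ⟨t, htB⟩))
        = (f.map B.subtype).eval ((a₀ : K) + t) := by
      rw [← eval₂_at_apply, eval_map]
      rfl
    -- Taylor expansion over K
    have hQmap : (taylor ((a₀ : K))) (f.map B.subtype) = q.map B.subtype := by
      rw [hq, taylor_apply, taylor_apply, map_comp]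
      simp only [Polynomial.map_add, map_X, map_C]
      rfl
    have e2 : (f.map B.subtype).eval ((a₀ : K) + t) = (q.map B.subtype).eval t := by
      rw [← hQmap, taylor_eval, add_comm]
    have hdeg : (q.map B.subtype).natDegree < m + 2 := by
      refine lt_of_le_of_lt (natDegree_map_le) ?_
      rw [hq, natDegree_taylor, hm]
      omega
    have e3 : (q.map B.subtype).eval t
        = ∑ i ∈ range (m + 2), (q.coeff i : K) * t ^ i := by
      rw [eval_eq_sum_range' hdeg]
      refine Finset.sum_congr rfl fun i _ => ?_
      rw [coeff_map]
      rfl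
    -- reflect the sum
    have e4 : ∑ i ∈ range (m + 2), (q.coeff i : K) * t ^ i
        = cK * (bK⁻¹) ^ (m + 1) * ∑ j ∈ range (m + 2), e j * bK ^ j := by
      rw [Finset.mul_sum]
      rw [← Finset.sum_range_reflect (fun j => cK * bK⁻¹ ^ (m + 1) * (e j * bK ^ j)) (m + 2)]
      refine Finset.sum_congr rfl fun i hi => ?_
      have hi' : i ≤ m + 1 := by
        have := mem_range.mp hi; omega
      obtain ⟨d, hd1, hd2⟩ : ∃ d, m + 1 - i = d ∧ d + i = m + 1 := ⟨m + 1 - i, rfl, by omega⟩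
      rw [show m + 2 - 1 - i = d from by omega]
      simp only [he]
      rw [show m + 1 - d = i from by omega, ← hd2]
      rw [ht, hu', hb']
      field_simp
      have hbd : bK ^ d * bK⁻¹ ^ d = 1 := by rw [← mul_pow, mul_inv_cancel₀ hbK0, one_pow]
      linear_combination (-((q.coeff i : K) * cK ^ i * uK⁻¹ ^ i * bK⁻¹ ^ i)) * hbd
    have e5 : ∑ j ∈ range (m + 2), e j * bK ^ j = 0 := by
      have hHb : ((H.eval b : A) : K) = ∑ j ∈ range (m + 2), e j * bK ^ j := by
        rw [sum_range_succ, sum_range_succ, heTop, heM, one_mul, one_mul]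
        rw [hH]
        simp only [eval_add, eval_pow, eval_X, hGeval]
        push_cast
        rw [Finset.sum_congr rfl fun j hj => by
          rw [heAcoe j (by have := mem_range.mp hj; omega)]]
        ring
      have : ((H.eval b : A) : K) = 0 := by rw [hbroot.eq_zero]; rfl
      rw [← hHb, this]
    rw [e1, e2, e3, e4, e5, mul_zero]
  have : f.eval (a₀ + ⟨t, htB⟩) = 0 := Subtype.ext hroot
  exact this
end
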